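/- arXiv:1907.04406 — 2 statements merged into one kernel-verified Lean document; each statement's English description precedes it below -/
import Mathlib

section
/- Let n ≥ 1, let 1 ≤ p < ∞, let γ ∈ (0,1) and R > 0, and set r = γR/(2 n^{1/p}). Then the ℓp ball B_p^n(R) can be covered by translates of the ℓ∞ ball B_∞^n(r) using at most (2 + 2/γ)^n · n^{n/p} · Γ(1 + 1/p)^n / Γ(1 + n/p) translates; i.e., there exists a finite set T ⊆ ℝ^n with |T| ≤ (2 + 2/γ)^n · n^{n/p} · Γ(1 + 1/p)^n / Γ(1 + n/p) such that B_p^n(R) ⊆ ⋃_{t ∈ T} (t + B_∞^n(r)). -/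
noncomputable def lpNorm (n : ℕ) (p : ℝ) (x : Fin n → ℝ) : ℝ :=
  (∑ i, |x i| ^ p) ^ (1 / p)

lemma lpNorm_triangle (n : ℕ) {p : ℝ} (hp : 1 ≤ p) (x y : Fin n → ℝ) :
    lpNorm n p (x + y) ≤ lpNorm n p x + lpNorm n p y := by
  have h₁ : 0 < p := by linarith
  have eq_norm := fun z : Fin n → ℝ => (PiLp.norm_eq_sum (p := .ofReal p) (f := WithLp.toLp (ENNReal.ofReal p) z)
    ((ENNReal.toReal_ofReal h₁.le).symm ▸ h₁))
  simp_rw [ENNReal.toReal_ofReal h₁.le, Real.norm_eq_abs] at eq_norm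
  have : Fact (1 ≤ ENNReal.ofReal p) :=
    fact_iff.mpr (ENNReal.ofReal_one ▸ (ENNReal.ofReal_le_ofReal hp))
  have nm_add := norm_add_le (E := PiLp (.ofReal p) (fun _ : Fin n => ℝ))
    (WithLp.toLp (ENNReal.ofReal p) x) (WithLp.toLp (ENNReal.ofReal p) y)
  rw [← WithLp.toLp_add] at nm_add
  simp_rw [eq_norm] at nm_add
  simpa [lpNorm] using nm_add

lemma coord_le_lpNorm (n : ℕ) {p : ℝ} (hp : 1 ≤ p) (x : Fin n → ℝ) (i : Fin n) :
    |x i| ≤ lpNorm n p x := by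
  have h₁ : 0 < p := by linarith
  have h2 : |x i| ^ p ≤ ∑ j, |x j| ^ p :=
    Finset.single_le_sum (fun j _ => Real.rpow_nonneg (abs_nonneg _) p) (Finset.mem_univ i)
  have h3 : (|x i| ^ p) ^ (1/p) ≤ (∑ j, |x j| ^ p) ^ (1/p) :=
    Real.rpow_le_rpow (Real.rpow_nonneg (abs_nonneg _) p) h2 (by positivity)
  rwa [← Real.rpow_mul (abs_nonneg _), mul_one_div_cancel h₁.ne', Real.rpow_one] at h3

lemma lpNorm_le_of_bounded (n : ℕ) {p : ℝ} (hp : 1 ≤ p) (z : Fin n → ℝ) {c : ℝ} (hc : 0 ≤ c)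
    (h : ∀ i, |z i| ≤ c) : lpNorm n p z ≤ (n : ℝ) ^ ((1:ℝ)/p) * c := by
  have h₁ : 0 < p := by linarith
  have h2 : ∑ i, |z i| ^ p ≤ (n : ℝ) * c ^ p := by
    calc ∑ i, |z i| ^ p ≤ ∑ _i : Fin n, c ^ p :=
          Finset.sum_le_sum fun i _ => Real.rpow_le_rpow (abs_nonneg _) (h i) h₁.le
      _ = (n : ℝ) * c ^ p := by simp [mul_comm]
  have h3 : (∑ i, |z i| ^ p) ^ (1/p) ≤ ((n : ℝ) * c ^ p) ^ (1/p) :=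
    Real.rpow_le_rpow (by positivity) h2 (by positivity)
  calc lpNorm n p z ≤ ((n : ℝ) * c ^ p) ^ (1/p) := h3
    _ = (n : ℝ) ^ ((1:ℝ)/p) * c := by
        rw [Real.mul_rpow (by positivity) (by positivity),
          ← Real.rpow_mul hc, mul_one_div_cancel h₁.ne', Real.rpow_one]

open MeasureTheory ENNReal in
/-- The ℓp ball `B_p^n(R)` of radius `R` can be covered by at most
`(2 + 2/γ)^n · n^{n/p} · Γ(1 + 1/p)^n / Γ(1 + n/p)` translates of the ℓ∞ ball of
radius `r = γR/(2 n^{1/p})`. -/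
theorem hypercube_covering (n : ℕ) (hn : 1 ≤ n) (p : ℝ) (hp : 1 ≤ p)
    (γ R r : ℝ) (hγ0 : 0 < γ) (hγ1 : γ < 1) (hR : 0 < R)
    (hr : r = γ * R / (2 * (n : ℝ) ^ ((1 : ℝ) / p))) :
    ∃ T : Finset (Fin n → ℝ),
      (T.card : ℝ) ≤ (2 + 2 / γ) ^ n * (n : ℝ) ^ ((n : ℝ) / p) *
          (Real.Gamma (1 + 1 / p)) ^ n / Real.Gamma (1 + (n : ℝ) / p) ∧
      {x : Fin n → ℝ | lpNorm n p x ≤ R} ⊆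
        ⋃ t ∈ T, {x : Fin n → ℝ | ∀ i, |x i - t i| ≤ r} := by
  classical
  have hp0 : (0:ℝ) < p := by linarith
  have hn0 : (0:ℝ) < (n:ℝ) := by exact_mod_cast hn
  obtain ⟨u, hu_def⟩ : ∃ u : ℝ, u = (n : ℝ) ^ ((1 : ℝ) / p) := ⟨_, rfl⟩
  have hu : 0 < u := by rw [hu_def]; positivity
  obtain ⟨b, hb_def⟩ : ∃ b : ℝ, b = γ * R / u := ⟨_, rfl⟩
  have hb : 0 < b := by rw [hb_def]; positivity
  have hrb : b = 2 * r := by rw [hb_def, hr, ← hu_def]; field_simp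
  have hub : u * b = γ * R := by rw [hb_def]; field_simp
  -- the half-open cubes
  obtain ⟨cube, hcube_def⟩ : ∃ cube : (Fin n → ℤ) → Set (Fin n → ℝ),
      cube = fun k => Set.univ.pi fun i => Set.Ico (b * k i) (b * k i + b) := ⟨_, rfl⟩
  have cube_mem : ∀ (k : Fin n → ℤ) (x : Fin n → ℝ),
      x ∈ cube k ↔ ∀ i, b * k i ≤ x i ∧ x i < b * k i + b := by
    intro k x
    simp [hcube_def, Set.mem_pi]
  have floor_eq : ∀ (m : ℤ) (y : ℝ), b * m ≤ y → y < b * m + b → m = ⌊y / b⌋ := by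
    intro m y h1 h2
    symm
    rw [Int.floor_eq_iff]
    constructor
    · rw [le_div_iff₀ hb, mul_comm]; exact h1
    · rw [div_lt_iff₀ hb]
      have e : ((m:ℝ) + 1) * b = b * m + b := by ring
      rw [e]; exact h2
  obtain ⟨M, hM_def⟩ : ∃ M : ℤ, M = ⌈R / b⌉ + 1 := ⟨_, rfl⟩
  obtain ⟨S, hS_def⟩ : ∃ S : Finset (Fin n → ℤ),
      S = (Fintype.piFinset fun _ : Fin n => Finset.Icc (-M) M).filter
        (fun k => ∃ x, lpNorm n p x ≤ R ∧ x ∈ cube k) := ⟨_, rfl⟩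
  refine ⟨S.image (fun k i => b * k i + r), ?_, ?_⟩
  · -- cardinality bound via volume argument
    haveI : Nonempty (Fin n) := Fin.pos_iff_nonempty.mp hn
    have hdisj : (↑S : Set (Fin n → ℤ)).PairwiseDisjoint cube := by
      intro k _ k' _ hkk'
      refine Set.disjoint_left.mpr fun x hx hx' => hkk' ?_
      funext i
      have h1 := (cube_mem k x).mp hx i
      have h2 := (cube_mem k' x).mp hx' i
      rw [floor_eq (k i) (x i) h1.1 h1.2, floor_eq (k' i) (x i) h2.1 h2.2]
    have cube_meas : ∀ k, MeasurableSet (cube k) := by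
      intro k; rw [hcube_def]
      exact MeasurableSet.univ_pi fun i => measurableSet_Ico
    have cube_vol : ∀ k, volume (cube k) = ENNReal.ofReal (b ^ n) := by
      intro k
      rw [hcube_def]
      rw [MeasureTheory.volume_pi_pi]
      have e : ∀ i : Fin n, volume (Set.Ico (b * (k i : ℝ)) (b * k i + b)) =
          ENNReal.ofReal b := by
        intro i; rw [Real.volume_Ico]; congr 1; ring
      rw [Finset.prod_congr rfl (fun i _ => e i), Finset.prod_const, Finset.card_univ,
        Fintype.card_fin, ← ENNReal.ofReal_pow hb.le]
    have cube_sub : ∀ k ∈ S, cube k ⊆ {x : Fin n → ℝ | lpNorm n p x ≤ (1 + γ) * R} := by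
      intro k hk y hy
      rw [hS_def, Finset.mem_filter] at hk
      obtain ⟨-, x0, hx0R, hx0c⟩ := hk
      have hdiff : ∀ i, |(y - x0) i| ≤ b := by
        intro i
        have h1 := (cube_mem k y).mp hy i
        have h2 := (cube_mem k x0).mp hx0c i
        simp only [Pi.sub_apply]
        rw [abs_le]
        constructor <;> linarith [h1.1, h1.2, h2.1, h2.2]
      have h3 : lpNorm n p (y - x0) ≤ u * b := by
        rw [hu_def]; exact lpNorm_le_of_bounded n hp _ hb.le hdiff
      have h4 : lpNorm n p y ≤ lpNorm n p x0 + lpNorm n p (y - x0) := by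
        have e : x0 + (y - x0) = y := by ring
        have := lpNorm_triangle n hp x0 (y - x0)
        rwa [e] at this
      have : lpNorm n p y ≤ R + γ * R := by rw [← hub]; linarith
      simpa [Set.mem_setOf_eq] using this.trans_eq (by ring)
    have hG : 0 < Real.Gamma (1/p + 1) := Real.Gamma_pos_of_pos (by positivity)
    have hD : 0 < Real.Gamma ((n:ℝ)/p + 1) := Real.Gamma_pos_of_pos (by positivity)
    have hcount : (S.card : ℝ≥0∞) * ENNReal.ofReal (b ^ n) ≤
        volume {x : Fin n → ℝ | lpNorm n p x ≤ (1 + γ) * R} := by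
      have h1 : volume (⋃ k ∈ S, cube k) = ∑ k ∈ S, volume (cube k) :=
        MeasureTheory.measure_biUnion_finset hdisj (fun k _ => cube_meas k)
      have h2 : (⋃ k ∈ S, cube k) ⊆ {x : Fin n → ℝ | lpNorm n p x ≤ (1 + γ) * R} :=
        Set.iUnion₂_subset cube_sub
      calc (S.card : ℝ≥0∞) * ENNReal.ofReal (b ^ n)
          = ∑ _k ∈ S, ENNReal.ofReal (b ^ n) := by
            rw [Finset.sum_const, nsmul_eq_mul]
        _ = ∑ k ∈ S, volume (cube k) := by
            exact Finset.sum_congr rfl fun k _ => (cube_vol k).symm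
        _ = volume (⋃ k ∈ S, cube k) := h1.symm
        _ ≤ _ := MeasureTheory.measure_mono h2
    have hvol : volume {x : Fin n → ℝ | lpNorm n p x ≤ (1 + γ) * R} =
        ENNReal.ofReal (((1 + γ) * R) ^ n *
          ((2 * Real.Gamma (1/p + 1)) ^ n / Real.Gamma ((n:ℝ)/p + 1))) := by
      have h := MeasureTheory.volume_sum_rpow_le (ι := Fin n) hp ((1 + γ) * R)
      rw [Fintype.card_fin] at h
      simp only [_root_.lpNorm]
      rw [h, ← ENNReal.ofReal_pow (by positivity), ← ENNReal.ofReal_mul (by positivity)]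
    have hreal : (S.card : ℝ) * b ^ n ≤
        ((1 + γ) * R) ^ n * ((2 * Real.Gamma (1/p + 1)) ^ n / Real.Gamma ((n:ℝ)/p + 1)) := by
      rw [hvol] at hcount
      rw [← ENNReal.ofReal_natCast, ← ENNReal.ofReal_mul (by positivity)] at hcount
      refine (ENNReal.ofReal_le_ofReal_iff ?_).mp hcount
      have : (0:ℝ) ≤ 2 * Real.Gamma (1/p + 1) := by linarith
      exact mul_nonneg (pow_nonneg (by positivity) n)
        (div_nonneg (pow_nonneg this n) hD.le)
    have key : ((2 + 2/γ) ^ n * (n:ℝ) ^ ((n:ℝ)/p) * (Real.Gamma (1 + 1/p)) ^ n /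
          Real.Gamma (1 + (n:ℝ)/p)) * b ^ n =
        ((1 + γ) * R) ^ n * ((2 * Real.Gamma (1/p + 1)) ^ n / Real.Gamma ((n:ℝ)/p + 1)) := by
      rw [add_comm (1:ℝ) (1/p), add_comm (1:ℝ) ((n:ℝ)/p)]
      have hN : (n:ℝ) ^ ((n:ℝ)/p) = u ^ n := by
        rw [hu_def, ← Real.rpow_natCast ((n:ℝ) ^ ((1:ℝ)/p)) n, ← Real.rpow_mul hn0.le]
        congr 1; ring
      rw [hN]
      have e1 : (2 + 2/γ) ^ n * u ^ n * (Real.Gamma (1/p + 1)) ^ n * b ^ n =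
          ((1 + γ) * R) ^ n * (2 * Real.Gamma (1/p + 1)) ^ n := by
        rw [← mul_pow, ← mul_pow, ← mul_pow, ← mul_pow]
        congr 1
        rw [hb_def]
        field_simp
        ring
      rw [div_mul_eq_mul_div, e1, mul_div_assoc]
    have hbn : (0:ℝ) < b ^ n := pow_pos hb n
    have hS_le : (S.card : ℝ) ≤ (2 + 2/γ) ^ n * (n:ℝ) ^ ((n:ℝ)/p) *
        (Real.Gamma (1 + 1/p)) ^ n / Real.Gamma (1 + (n:ℝ)/p) := by
      refine le_of_mul_le_mul_right ?_ hbn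
      rw [key]; exact hreal
    calc ((S.image (fun k i => b * k i + r)).card : ℝ) ≤ (S.card : ℝ) := by
          exact_mod_cast Finset.card_image_le
      _ ≤ _ := hS_le
  · -- covering
    intro x hx
    simp only [Set.mem_setOf_eq] at hx
    set k : Fin n → ℤ := fun i => ⌊x i / b⌋ with hk_def
    have hxk : x ∈ cube k := by
      rw [cube_mem]
      intro i
      constructor
      · rw [mul_comm]
        exact (le_div_iff₀ hb).mp (Int.floor_le _)
      · have h := Int.lt_floor_add_one (x i / b)
        rw [div_lt_iff₀ hb] at h
        calc x i < (↑⌊x i / b⌋ + 1) * b := h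
          _ = b * k i + b := by rw [hk_def]; ring
    have hkS : k ∈ S := by
      rw [hS_def, Finset.mem_filter]
      refine ⟨Fintype.mem_piFinset.mpr fun i => ?_, x, hx, hxk⟩
      have hxi : |x i| ≤ R := (coord_le_lpNorm n hp x i).trans hx
      obtain ⟨hxl, hxu⟩ := abs_le.mp hxi
      have hceil : R / b ≤ (⌈R / b⌉ : ℝ) := Int.le_ceil _
      have hdivu : x i / b ≤ R / b := by gcongr
      have hdivl : -(R / b) ≤ x i / b := by
        rw [← neg_div]; gcongr
      rw [Finset.mem_Icc]
      constructor
      · have h1 : ((-M : ℤ) : ℝ) ≤ (k i : ℝ) := by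
          have h2 : x i / b - 1 < (k i : ℝ) := by
            have := Int.lt_floor_add_one (x i / b)
            rw [hk_def]; push_cast; linarith
          push_cast [hM_def]
          linarith
        exact_mod_cast h1
      · have h1 : (k i : ℝ) ≤ ((M : ℤ) : ℝ) := by
          have h2 : (k i : ℝ) ≤ x i / b := Int.floor_le _
          push_cast [hM_def]
          linarith
        exact_mod_cast h1
    refine Set.mem_biUnion (Finset.mem_coe.mpr (Finset.mem_image_of_mem _ hkS)) ?_
    intro i
    have h1 := (cube_mem k x).mp hxk i
    simp only []
    rw [abs_le]
    constructor
    · linarith [h1.1, hrb]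
    · linarith [h1.2, hrb]
end

section
/- Let n ≥ 1, 1 ≤ p < ∞, λ > 0, ξ > 1/2, and let u ∈ ℝ^n with ‖u‖_p ≤ λ. Then vol(B_p^n(0, ξλ) ∩ B_p^n(u, ξλ)) ≥ (1/2 − 1/(4ξ))^n · vol(B_p^n(0, ξλ)). In particular, the probability q that a uniformly random point of B_p^n(0, ξλ) lies in B_p^n(0,ξλ) ∩ B_p^n(u,ξλ) satisfies q ≥ 2^{−c_s n} with c_s = −log₂(1/2 − 1/(4ξ)). -/
open MeasureTheory ENNReal
open Pointwise

variable {n : ℕ} {p : ℝ}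

lemma lpNorm_nonneg (x : Fin n → ℝ) : 0 ≤ lpNorm n p x :=
  Real.rpow_nonneg (Finset.sum_nonneg fun i _ => Real.rpow_nonneg (abs_nonneg _) _) _

lemma lpNorm_neg (x : Fin n → ℝ) : lpNorm n p (-x) = lpNorm n p x := by
  simp [_root_.lpNorm]

lemma lpNorm_smul (hp : 1 ≤ p) {t : ℝ} (ht : 0 ≤ t) (x : Fin n → ℝ) :
    lpNorm n p (t • x) = t * lpNorm n p x := by
  have hp0 : p ≠ 0 := by positivity
  unfold _root_.lpNorm
  have h1 : ∀ i, |(t • x) i| ^ p = t ^ p * |x i| ^ p := by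
    intro i
    simp only [Pi.smul_apply, smul_eq_mul, abs_mul, abs_of_nonneg ht]
    exact Real.mul_rpow ht (abs_nonneg _)
  simp_rw [h1, ← Finset.mul_sum]
  rw [Real.mul_rpow (by positivity) (Finset.sum_nonneg fun i _ => by positivity),
    ← Real.rpow_mul ht, mul_one_div_cancel hp0, Real.rpow_one]

lemma lpNorm_add_le (hp : 1 ≤ p) (x y : Fin n → ℝ) :
    lpNorm n p (x + y) ≤ lpNorm n p x + lpNorm n p y :=
  Real.Lp_add_le Finset.univ x y hp

lemma abs_le_lpNorm (hp : 1 ≤ p) (x : Fin n → ℝ) (i : Fin n) : |x i| ≤ lpNorm n p x := by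
  have hp0 : (0:ℝ) < p := lt_of_lt_of_le one_pos hp
  have : |x i| ^ p ≤ ∑ j, |x j| ^ p :=
    Finset.single_le_sum (fun j _ => Real.rpow_nonneg (abs_nonneg _) _) (Finset.mem_univ i)
  calc |x i| = (|x i| ^ p) ^ (1/p) := by
        rw [← Real.rpow_mul (abs_nonneg _), mul_one_div_cancel hp0.ne', Real.rpow_one]
    _ ≤ _ := Real.rpow_le_rpow (by positivity) this (by positivity)

lemma ball_scale (hp : 1 ≤ p) {t R : ℝ} (ht : 0 < t) :
    {x : Fin n → ℝ | lpNorm n p x ≤ t * R} = t • {x : Fin n → ℝ | lpNorm n p x ≤ R} := by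
  ext x
  rw [Set.mem_smul_set_iff_inv_smul_mem₀ ht.ne']
  simp only [Set.mem_setOf_eq, lpNorm_smul hp (inv_nonneg.2 ht.le)]
  rw [inv_mul_le_iff₀ ht]

lemma volume_ball_scale (hp : 1 ≤ p) {t R : ℝ} (ht : 0 < t) :
    volume {x : Fin n → ℝ | lpNorm n p x ≤ t * R} =
      ENNReal.ofReal (t ^ n) * volume {x : Fin n → ℝ | lpNorm n p x ≤ R} := by
  rw [ball_scale hp ht, Measure.addHaar_smul, Module.finrank_fin_fun, abs_of_pos (pow_pos ht n)]

lemma ball_translate (c : Fin n → ℝ) (R : ℝ) :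
    {x : Fin n → ℝ | lpNorm n p (x - c) ≤ R} = c +ᵥ {x : Fin n → ℝ | lpNorm n p x ≤ R} := by
  ext x
  simp only [Set.mem_vadd_set_iff_neg_vadd_mem, Set.mem_setOf_eq, vadd_eq_add]
  rw [show -c + x = x - c by ring]

lemma volume_ball_pos (hp : 1 ≤ p) {R : ℝ} (hR : 0 < R) :
    0 < volume {x : Fin n → ℝ | lpNorm n p x ≤ R} := by
  have hp0 : (0:ℝ) < p := lt_of_lt_of_le one_pos hp
  set ε : ℝ := R / (n+1 : ℝ) ^ (1/p) with hε
  have hεpos : 0 < ε := by positivity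
  have hsub : (Set.pi Set.univ fun _ : Fin n => Set.Icc (-ε) ε) ⊆
      {x : Fin n → ℝ | lpNorm n p x ≤ R} := by
    intro x hx
    simp only [Set.mem_pi, Set.mem_univ, Set.mem_Icc, forall_true_left] at hx
    have habs : ∀ i, |x i| ≤ ε := fun i => abs_le.2 (hx i)
    have : lpNorm n p x ≤ ((n:ℝ) * ε ^ p) ^ (1/p) := by
      apply Real.rpow_le_rpow (Finset.sum_nonneg fun i _ => by positivity) _ (by positivity)
      calc ∑ i, |x i| ^ p ≤ ∑ _i : Fin n, ε ^ p :=
            Finset.sum_le_sum fun i _ =>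
              Real.rpow_le_rpow (abs_nonneg _) (habs i) hp0.le
        _ = (n:ℝ) * ε ^ p := by simp [mul_comm]
    refine this.trans ?_
    rw [Real.mul_rpow (by positivity) (by positivity), ← Real.rpow_mul hεpos.le,
      mul_one_div_cancel hp0.ne', Real.rpow_one]
    calc (n:ℝ) ^ (1/p) * ε ≤ ((n:ℝ)+1) ^ (1/p) * ε := by
          have h1 : (n:ℝ) ^ (1/p) ≤ ((n:ℝ)+1) ^ (1/p) :=
            Real.rpow_le_rpow (Nat.cast_nonneg n) (by linarith) (by positivity)
          exact mul_le_mul_of_nonneg_right h1 hεpos.le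
      _ = R := by
          have hc : ((n:ℝ)+1) ^ (1/p) ≠ 0 := by positivity
          rw [hε, mul_comm, div_mul_cancel₀ _ hc]
  refine lt_of_lt_of_le ?_ (measure_mono hsub)
  rw [volume_pi_pi]
  refine CanonicallyOrderedAdd.prod_pos.2 fun i _ => ?_
  rw [Real.volume_Icc, ENNReal.ofReal_pos]
  linarith

lemma volume_ball_lt_top (hp : 1 ≤ p) {R : ℝ} (hR : 0 < R) :
    volume {x : Fin n → ℝ | lpNorm n p x ≤ R} < ⊤ := by
  have hsub : {x : Fin n → ℝ | lpNorm n p x ≤ R} ⊆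
      Set.pi Set.univ fun _ : Fin n => Set.Icc (-R) R := by
    intro x hx
    simp only [Set.mem_pi, Set.mem_univ, Set.mem_Icc, forall_true_left]
    intro i
    exact abs_le.1 ((abs_le_lpNorm hp x i).trans hx)
  refine lt_of_le_of_lt (measure_mono hsub) ?_
  rw [volume_pi_pi]
  exact ENNReal.prod_lt_top fun i _ => (by rw [Real.volume_Icc]; exact ENNReal.ofReal_lt_top)


/-- Overlap lemma: `vol(B_p^n(0,ξλ) ∩ B_p^n(u,ξλ)) ≥ (1/2 - 1/(4ξ))^n · vol(B_p^n(0,ξλ))`;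
in particular the probability `q` that a uniform point of `B_p^n(0,ξλ)` lands in the
overlap satisfies `q ≥ 2^{-c_s n}` with `c_s = -log₂(1/2 - 1/(4ξ))`. -/
theorem overlap_volume (n : ℕ) (hn : 1 ≤ n) (p : ℝ) (hp : 1 ≤ p)
    (lam ξ : ℝ) (hlam : 0 < lam) (hξ : (1 : ℝ) / 2 < ξ)
    (u : Fin n → ℝ) (hu : lpNorm n p u ≤ lam) :
    ENNReal.ofReal ((1 / 2 - 1 / (4 * ξ)) ^ n) *
        volume {x : Fin n → ℝ | lpNorm n p x ≤ ξ * lam} ≤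
      volume ({x : Fin n → ℝ | lpNorm n p x ≤ ξ * lam} ∩
        {x : Fin n → ℝ | lpNorm n p (x - u) ≤ ξ * lam}) ∧
    ENNReal.ofReal ((2 : ℝ) ^ (-(-(Real.logb 2 (1 / 2 - 1 / (4 * ξ)))) * (n : ℝ))) ≤
      volume ({x : Fin n → ℝ | lpNorm n p x ≤ ξ * lam} ∩
          {x : Fin n → ℝ | lpNorm n p (x - u) ≤ ξ * lam}) /
        volume {x : Fin n → ℝ | lpNorm n p x ≤ ξ * lam} := by
  have hξ0 : 0 < ξ := by linarith
  set a : ℝ := 1 / 2 - 1 / (4 * ξ) with ha_def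
  have ha : 0 < a := by
    have : 1 / (4 * ξ) < 1 / 2 := by
      rw [div_lt_div_iff₀ (by linarith) (by norm_num)]
      linarith
    simp only [ha_def]; linarith
  set R : ℝ := ξ * lam with hR_def
  have hR : 0 < R := by positivity
  set c : Fin n → ℝ := (2⁻¹ : ℝ) • u with hc_def
  have hc : lpNorm n p c ≤ lam / 2 := by
    rw [hc_def, lpNorm_smul hp (by norm_num)]
    linarith
  have haR : a * R = (ξ / 2 - 1 / 4) * lam := by
    rw [ha_def, hR_def]; field_simp
  -- the small ball is contained in the intersection
  have hsub : {x : Fin n → ℝ | lpNorm n p (x - c) ≤ a * R} ⊆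
      {x : Fin n → ℝ | lpNorm n p x ≤ R} ∩ {x : Fin n → ℝ | lpNorm n p (x - u) ≤ R} := by
    intro x hx
    simp only [Set.mem_setOf_eq] at hx
    constructor
    · have h1 : x = (x - c) + c := by ring
      calc lpNorm n p x = lpNorm n p ((x - c) + c) := by rw [← h1]
        _ ≤ lpNorm n p (x - c) + lpNorm n p c := lpNorm_add_le hp _ _
        _ ≤ a * R + lam / 2 := add_le_add hx hc
        _ ≤ R := by rw [haR, hR_def]; nlinarith
    · have h2 : x - u = (x - c) + (-c) := by
        rw [hc_def]; ext i; simp; ring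
      simp only [Set.mem_setOf_eq]
      calc lpNorm n p (x - u) = lpNorm n p ((x - c) + (-c)) := by rw [← h2]
        _ ≤ lpNorm n p (x - c) + lpNorm n p (-c) := lpNorm_add_le hp _ _
        _ = lpNorm n p (x - c) + lpNorm n p c := by rw [_root_.lpNorm_neg]
        _ ≤ a * R + lam / 2 := add_le_add hx hc
        _ ≤ R := by rw [haR, hR_def]; nlinarith
  have hvol_small : volume {x : Fin n → ℝ | lpNorm n p (x - c) ≤ a * R} =
      ENNReal.ofReal (a ^ n) * volume {x : Fin n → ℝ | lpNorm n p x ≤ R} := by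
    rw [ball_translate c (a * R), measure_vadd, volume_ball_scale hp ha]
  have part1 : ENNReal.ofReal (a ^ n) * volume {x : Fin n → ℝ | lpNorm n p x ≤ R} ≤
      volume ({x : Fin n → ℝ | lpNorm n p x ≤ R} ∩
        {x : Fin n → ℝ | lpNorm n p (x - u) ≤ R}) := by
    rw [← hvol_small]
    exact measure_mono hsub
  refine ⟨part1, ?_⟩
  have hexp : (2 : ℝ) ^ (-(-(Real.logb 2 a)) * (n : ℝ)) = a ^ n := by
    rw [neg_neg, Real.rpow_mul (by norm_num), Real.rpow_logb (by norm_num) (by norm_num) ha,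
      Real.rpow_natCast]
  rw [hexp, ENNReal.le_div_iff_mul_le
    (Or.inl (volume_ball_pos hp hR).ne') (Or.inl (volume_ball_lt_top hp hR).ne)]
  exact part1
end
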